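/- Let V be a real inner product space with orthogonal almost complex structure J and let R be an algebraic curvature tensor on V satisfying the weak-constant-type identity R(X,Y,X,Y) - 2R(X,Y,JX,JY) + R(JX,JY,JX,JY) = 2α(g(X,X)g(Y,Y) - g(X,Y)² - g(JX,Y)²) with α ≠ 0. Then there is no nonzero proper J-invariant subspace S of V with R(X,Y)(S) ⊆ S for all X, Y ∈ V. -/
import Mathlib


open scoped RealInnerProductSpace

/-- If an algebraic curvature tensor satisfies the weak-constant-type identity
with `α ≠ 0`, then there is no nonzero proper `J`-invariant strongly
`R`-invariant subspace. -/
theorem stmt8 {V : Type*} [NormedAddCommGroup V] [InnerProductSpace ℝ V]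
    [FiniteDimensional ℝ V]
    (J : V →ₗ[ℝ] V) (hJ2 : ∀ X, J (J X) = -X)
    (hJg : ∀ X Y, ⟪J X, J Y⟫ = ⟪X, Y⟫)
    (R : V →ₗ[ℝ] V →ₗ[ℝ] V →ₗ[ℝ] V →ₗ[ℝ] ℝ)
    (hA1 : ∀ X Y Z W, R X Y Z W = - R Y X Z W)
    (hA2 : ∀ X Y Z W, R X Y Z W = - R X Y W Z)
    (hP : ∀ X Y Z W, R X Y Z W = R Z W X Y)
    (hB : ∀ X Y Z W, R X Y Z W + R Y Z X W + R Z X Y W = 0)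
    (Rop : V → V → V → V)
    (hRop : ∀ A B C D, ⟪Rop A B C, D⟫ = R A B C D)
    (α : ℝ) (hα : α ≠ 0)
    (hweak : ∀ X Y, R X Y X Y - 2 * R X Y (J X) (J Y)
        + R (J X) (J Y) (J X) (J Y)
        = 2 * α * (⟪X, X⟫ * ⟪Y, Y⟫ - ⟪X, Y⟫ ^ 2 - ⟪J X, Y⟫ ^ 2)) :
    ¬ ∃ S : Submodule ℝ V, S ≠ ⊥ ∧ S ≠ ⊤ ∧ (∀ X ∈ S, J X ∈ S) ∧
      (∀ X Y : V, ∀ Z ∈ S, Rop X Y Z ∈ S) := by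
  rintro ⟨S, hbot, htop, hJS, hRS⟩
  -- pick a nonzero X ∈ S
  obtain ⟨X, hXS, hX0⟩ := Submodule.exists_mem_ne_zero_of_ne_bot hbot
  -- Sᗮ ≠ ⊥
  have horth : Sᗮ ≠ ⊥ := by
    intro h
    exact htop ((Submodule.orthogonal_eq_bot_iff).mp h)
  obtain ⟨ξ, hξS, hξ0⟩ := Submodule.exists_mem_ne_zero_of_ne_bot horth
  -- key vanishing
  have hzero : ∀ A B : V, ∀ Z ∈ S, ∀ W ∈ Sᗮ, R A B Z W = 0 := by
    intro A B Z hZ W hW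
    rw [← hRop]
    exact (Submodule.mem_orthogonal S W).mp hW _ (hRS A B Z hZ)
  have hJξ : J ξ ∈ Sᗮ := by
    rw [Submodule.mem_orthogonal]
    intro u hu
    have : ⟪u, J ξ⟫ = - ⟪J u, ξ⟫ := by
      rw [← hJg u (J ξ), hJ2, inner_neg_right]
    rw [this, (Submodule.mem_orthogonal S ξ).mp hξS _ (hJS u hu), neg_zero]
  have h1 : R X ξ X ξ = 0 := hzero X ξ X hXS ξ hξS
  have h2 : R X ξ (J X) (J ξ) = 0 := hzero X ξ (J X) (hJS X hXS) (J ξ) hJξ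
  have h3 : R (J X) (J ξ) (J X) (J ξ) = 0 := hzero (J X) (J ξ) (J X) (hJS X hXS) (J ξ) hJξ
  have hXξ : ⟪X, ξ⟫ = 0 := (Submodule.mem_orthogonal S ξ).mp hξS _ hXS
  have hJXξ : ⟪J X, ξ⟫ = 0 := (Submodule.mem_orthogonal S ξ).mp hξS _ (hJS X hXS)
  have hw := hweak X ξ
  rw [h1, h2, h3, hXξ, hJXξ] at hw
  have hXX : ⟪X, X⟫ ≠ 0 := fun h => hX0 (inner_self_eq_zero.mp h)
  have hξξ : ⟪ξ, ξ⟫ ≠ 0 := fun h => hξ0 (inner_self_eq_zero.mp h)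
  have hw' : α * (⟪X, X⟫ * ⟪ξ, ξ⟫) = 0 := by linear_combination (-1/2 : ℝ) * hw
  rcases mul_eq_zero.mp hw' with h | h
  · exact hα h
  · rcases mul_eq_zero.mp h with h | h
    · exact hXX h
    · exact hξξ h
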